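/- Under the CD decomposition V = V̂XY + V̂^null SZ (with X unitary, SᴴS = I, V̂^{null,H}V̂ = 0, orthonormal column matrices V, V̂), the squared chordal distance satisfies d_c²(V, V̂) = tr(ZᴴZ) = ‖Z‖_F². -/
import Mathlib


open Matrix

noncomputable def frobSq {m n : Type*} [Fintype m] [Fintype n] (A : Matrix m n ℂ) : ℝ :=
  (Aᴴ * A).trace.re

/-- Under the CD decomposition, d_c²(V, V̂) = tr(ZᴴZ) = ‖Z‖_F². -/
theorem cd_decomposition_dist (M d e : ℕ)
    (V Vh : Matrix (Fin M) (Fin d) ℂ) (Vn : Matrix (Fin M) (Fin e) ℂ)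
    (X Y Z : Matrix (Fin d) (Fin d) ℂ) (S : Matrix (Fin e) (Fin d) ℂ)
    (hV : Vᴴ * V = 1) (hVh : Vhᴴ * Vh = 1)
    (hVn : Vnᴴ * Vn = 1) (hVnVh : Vnᴴ * Vh = 0)
    (hX : Xᴴ * X = 1) (hXu : X * Xᴴ = 1) (hS : Sᴴ * S = 1)
    (hdecomp : V = Vh * X * Y + Vn * S * Z) :
    (d : ℝ) - frobSq (Vhᴴ * V) = (Zᴴ * Z).trace.re ∧
    (d : ℝ) - frobSq (Vhᴴ * V) = frobSq Z := by
  have hVhVn : Vhᴴ * Vn = 0 := by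
    have := congrArg conjTranspose hVnVh
    simpa [conjTranspose_mul] using this
  have hVh' : ∀ (A : Matrix (Fin d) (Fin d) ℂ), Vhᴴ * (Vh * A) = A := by
    intro A; rw [← Matrix.mul_assoc, hVh, Matrix.one_mul]
  have hVn' : ∀ (A : Matrix (Fin e) (Fin d) ℂ), Vnᴴ * (Vn * A) = A := by
    intro A; rw [← Matrix.mul_assoc, hVn, Matrix.one_mul]
  have hVhVn' : ∀ (A : Matrix (Fin e) (Fin d) ℂ), Vhᴴ * (Vn * A) = 0 := by
    intro A; rw [← Matrix.mul_assoc, hVhVn, Matrix.zero_mul]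
  have hVnVh' : ∀ (A : Matrix (Fin d) (Fin d) ℂ), Vnᴴ * (Vh * A) = 0 := by
    intro A; rw [← Matrix.mul_assoc, hVnVh, Matrix.zero_mul]
  have hX' : ∀ (A : Matrix (Fin d) (Fin d) ℂ), Xᴴ * (X * A) = A := by
    intro A; rw [← Matrix.mul_assoc, hX, Matrix.one_mul]
  have hS' : ∀ (A : Matrix (Fin d) (Fin d) ℂ), Sᴴ * (S * A) = A := by
    intro A; rw [← Matrix.mul_assoc, hS, Matrix.one_mul]
  have h1 : Vhᴴ * V = X * Y := by
    rw [hdecomp]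
    simp [Matrix.mul_add, Matrix.mul_assoc, hVh', hVhVn']
  have h2 : Yᴴ * Y + Zᴴ * Z = 1 := by
    have e1 : Vᴴ * V = Yᴴ * Y + Zᴴ * Z := by
      rw [hdecomp]
      simp [conjTranspose_add, conjTranspose_mul, Matrix.add_mul, Matrix.mul_add, Matrix.mul_assoc,
        hVh', hVn', hVhVn', hVnVh', hX', hS']
    rw [← e1, hV]
  have hfrob : frobSq (Vhᴴ * V) = (Yᴴ * Y).trace.re := by
    rw [h1]
    unfold frobSq
    simp [conjTranspose_mul, Matrix.mul_assoc, hX']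
  have htr : (Yᴴ * Y).trace.re + (Zᴴ * Z).trace.re = (d : ℝ) := by
    have := congrArg Matrix.trace h2
    rw [trace_add, trace_one] at this
    have := congrArg Complex.re this
    simpa using this
  constructor
  · rw [hfrob]; linarith
  · rw [hfrob]; unfold frobSq; linarith
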